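/- arXiv:1501.07686 — 7 statements merged into one kernel-verified Lean document; each statement's English description precedes it below -/
import Mathlib

section
/- Let L1, L2 and L3 be three tree languages over a graded alphabet Σ, and let a and b be two distinct symbols in Σ_0 such that L3 ⊆ T(Σ∖{a}), i.e. the symbol a appears in no tree of L3. Then (L1 ·_a L2) ·_b L3 = (L1 ·_b L3) ·_a (L2 ·_b L3). -/
attribute [local instance] Classical.propDecidable

/-- Trees over a graded alphabet: symbols `α` with arity function `ar`. -/
inductive GTree (α : Type) (ar : α → ℕ) : Type
  | node (f : α) (children : Fin (ar f) → GTree α ar) : GTree α ar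

namespace GTree

variable {α : Type} {ar : α → ℕ}

/-- The `c`-product of a tree with a tree language. -/
def cprod (c : α) : GTree α ar → Set (GTree α ar) → Set (GTree α ar)
  | node f ch, L =>
    if f = c then L
    else { s | ∃ ch' : Fin (ar f) → GTree α ar,
            s = node f ch' ∧ ∀ i, ch' i ∈ cprod c (ch i) L }

/-- The `c`-product of two tree languages. -/
def lprod (c : α) (L L' : Set (GTree α ar)) : Set (GTree α ar) :=
  ⋃ t ∈ L, cprod c t L'

/-- The single-node tree `c`, for `c` of rank 0. -/
def leaf (c : α) (hc : ar c = 0) : GTree α ar :=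
  node c (fun i => (i.cast hc).elim0)

/-- The iterated `c`-product `L^{n,c}`. -/
def iterProd (c : α) (hc : ar c = 0) (L : Set (GTree α ar)) : ℕ → Set (GTree α ar)
  | 0 => {leaf c hc}
  | n + 1 => iterProd c hc L n ∪ lprod c L (iterProd c hc L n)

/-- The `c`-closure `L^{*_c}`. -/
def closure (c : α) (hc : ar c = 0) (L : Set (GTree α ar)) : Set (GTree α ar) :=
  ⋃ n, iterProd c hc L n

/-- The symbol `a` occurs (appears) in the tree. -/
def occurs (a : α) : GTree α ar → Prop
  | node f ch => f = a ∨ ∃ i, occurs a (ch i)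

end GTree

namespace GTree
variable {α : Type} {ar : α → ℕ}

lemma node_congr {f : α} (h : ar f = 0) (ch ch' : Fin (ar f) → GTree α ar) :
    node f ch = node f ch' := by
  congr 1; funext i; exact absurd i.isLt (by omega)

lemma mem_lprod {c : α} {L L' : Set (GTree α ar)} {s : GTree α ar} :
    s ∈ lprod c L L' ↔ ∃ t ∈ L, s ∈ cprod c t L' := by
  simp [lprod]

lemma cprod_not_occurs {a : α} {t : GTree α ar} (h : ¬ occurs a t)
    (L : Set (GTree α ar)) : cprod a t L = {t} := by
  induction t with
  | node f ch ih =>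
    have hf : f ≠ a := fun hfa => h (Or.inl hfa)
    ext s
    simp only [cprod, if_neg hf, Set.mem_setOf_eq, Set.mem_singleton_iff]
    constructor
    · rintro ⟨ch', rfl, hch'⟩
      have : ch' = ch := by
        funext i
        have := ih i (fun ho => h (Or.inr ⟨i, ho⟩))
        have := hch' i
        rw [ih i (fun ho => h (Or.inr ⟨i, ho⟩))] at this
        exact this
      rw [this]
    · rintro rfl
      exact ⟨ch, rfl, fun i => by
        rw [ih i (fun ho => h (Or.inr ⟨i, ho⟩))]; rfl⟩

lemma key (a b : α) (ha : ar a = 0) (hb : ar b = 0) (hab : a ≠ b)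
    (L2 L3 : Set (GTree α ar)) (h3 : ∀ t ∈ L3, ¬ occurs a t) (t : GTree α ar) :
    lprod b (cprod a t L2) L3 = lprod a (cprod b t L3) (lprod b L2 L3) := by
  induction t with
  | node f ch ih =>
    by_cases hfa : f = a
    · subst hfa
      have hfb : f ≠ b := hab
      -- cprod a t L2 = L2, cprod b t L3 = {t}
      have h1 : cprod b (node f ch) L3 = {node f ch} := by
        ext s
        simp only [cprod, if_neg hfb, Set.mem_setOf_eq, Set.mem_singleton_iff]
        constructor
        · rintro ⟨ch', rfl, _⟩; exact node_congr ha ch' ch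
        · rintro rfl; exact ⟨ch, rfl, fun i => absurd i.isLt (by omega)⟩
      rw [show cprod f (node f ch) L2 = L2 from by simp [cprod], h1]
      ext s
      simp only [mem_lprod, Set.mem_singleton_iff]
      constructor
      · rintro hs
        refine ⟨node f ch, rfl, ?_⟩
        simp only [cprod, if_pos rfl]
        exact mem_lprod.mpr hs
      · rintro ⟨u, rfl, hu⟩
        simp only [cprod, if_pos rfl] at hu
        exact mem_lprod.mp hu
    · by_cases hfb : f = b
      · subst hfb
        have h1 : cprod a (node f ch) L2 = {node f ch} := by
          ext s
          simp only [cprod, if_neg hfa, Set.mem_setOf_eq, Set.mem_singleton_iff]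
          constructor
          · rintro ⟨ch', rfl, _⟩; exact node_congr hb ch' ch
          · rintro rfl; exact ⟨ch, rfl, fun i => absurd i.isLt (by omega)⟩
        rw [h1, show cprod f (node f ch) L3 = L3 from by simp [cprod]]
        ext s
        simp only [mem_lprod, Set.mem_singleton_iff]
        constructor
        · rintro ⟨u, rfl, hu⟩
          simp only [cprod, if_pos rfl] at hu
          exact ⟨s, hu, by rw [cprod_not_occurs (h3 s hu)]; rfl⟩
        · rintro ⟨u, hu, hsu⟩
          rw [cprod_not_occurs (h3 u hu)] at hsu
          subst hsu
          exact ⟨node f ch, rfl, by simp [cprod, hu]⟩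
      · -- f ≠ a, f ≠ b
        ext s
        simp only [mem_lprod]
        constructor
        · rintro ⟨u, hu, hsu⟩
          simp only [cprod, if_neg hfa, Set.mem_setOf_eq] at hu
          obtain ⟨ch', rfl, hch'⟩ := hu
          simp only [cprod, if_neg hfb, Set.mem_setOf_eq] at hsu
          obtain ⟨ch'', rfl, hch''⟩ := hsu
          -- ch'' i ∈ lprod b (cprod a (ch i) L2) L3 = RHS
          have hmem : ∀ i, ch'' i ∈ lprod a (cprod b (ch i) L3) (lprod b L2 L3) := by
            intro i
            rw [← ih i]
            exact mem_lprod.mpr ⟨ch' i, hch' i, hch'' i⟩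
          -- choose u' i ∈ cprod b (ch i) L3 with ch'' i ∈ cprod a (u' i) ...
          choose u' hu1 hu2 using fun i => mem_lprod.mp (hmem i)
          refine ⟨node f u', ?_, ?_⟩
          · simp only [cprod, if_neg hfb, Set.mem_setOf_eq]
            exact ⟨u', rfl, hu1⟩
          · simp only [cprod, if_neg hfa, Set.mem_setOf_eq]
            exact ⟨ch'', rfl, hu2⟩
        · rintro ⟨u, hu, hsu⟩
          simp only [cprod, if_neg hfb, Set.mem_setOf_eq] at hu
          obtain ⟨ch', rfl, hch'⟩ := hu
          simp only [cprod, if_neg hfa, Set.mem_setOf_eq] at hsu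
          obtain ⟨ch'', rfl, hch''⟩ := hsu
          have hmem : ∀ i, ch'' i ∈ lprod b (cprod a (ch i) L2) L3 := by
            intro i
            rw [ih i]
            exact mem_lprod.mpr ⟨ch' i, hch' i, hch'' i⟩
          choose u' hu1 hu2 using fun i => mem_lprod.mp (hmem i)
          refine ⟨node f u', ?_, ?_⟩
          · simp only [cprod, if_neg hfa, Set.mem_setOf_eq]
            exact ⟨u', rfl, hu1⟩
          · simp only [cprod, if_neg hfb, Set.mem_setOf_eq]
            exact ⟨ch'', rfl, hu2⟩

end GTree

/-- if `a ≠ b` are rank-0 symbols and `a` appears in no tree of `L3`,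
then `(L1 ·_a L2) ·_b L3 = (L1 ·_b L3) ·_a (L2 ·_b L3)`. -/
theorem lprod_distrib {α : Type} {ar : α → ℕ} (a b : α)
    (ha : ar a = 0) (hb : ar b = 0) (hab : a ≠ b)
    (L1 L2 L3 : Set (GTree α ar)) (h3 : ∀ t ∈ L3, ¬ GTree.occurs a t) :
    GTree.lprod b (GTree.lprod a L1 L2) L3 =
      GTree.lprod a (GTree.lprod b L1 L3) (GTree.lprod b L2 L3) := by
  
  ext s
  simp only [GTree.mem_lprod]
  constructor
  · rintro ⟨u, hu, hsu⟩
    obtain ⟨t, ht, hut⟩ := hu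
    have : s ∈ GTree.lprod b (GTree.cprod a t L2) L3 := GTree.mem_lprod.mpr ⟨u, hut, hsu⟩
    rw [GTree.key a b ha hb hab L2 L3 h3 t] at this
    obtain ⟨v, hv, hsv⟩ := GTree.mem_lprod.mp this
    exact ⟨v, ⟨t, ht, hv⟩, hsv⟩
  · rintro ⟨v, hv, hsv⟩
    obtain ⟨t, ht, hvt⟩ := hv
    have : s ∈ GTree.lprod a (GTree.cprod b t L3) (GTree.lprod b L2 L3) :=
      GTree.mem_lprod.mpr ⟨v, hvt, hsv⟩
    rw [← GTree.key a b ha hb hab L2 L3 h3 t] at this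
    obtain ⟨u, hu, hsu⟩ := GTree.mem_lprod.mp this
    exact ⟨u, ⟨t, ht, hu⟩, hsu⟩
end

section
/- Let L1 and L2 be two tree languages over a graded alphabet Σ, and let a and b be two distinct symbols in Σ_0 such that L2 ⊆ T(Σ∖{a}), i.e. the symbol a appears in no tree of L2. Then L1^{*_a} ·_b L2 = (L1 ·_b L2)^{*_a}. -/
attribute [local instance] Classical.propDecidable

namespace GTree

variable {α : Type} {ar : α → ℕ}

lemma cprod_node_eq {c f : α} (hfc : f = c) (ch : Fin (ar f) → GTree α ar)
    (L : Set (GTree α ar)) : cprod c (node f ch) L = L := by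
  simp [cprod, hfc]

lemma mem_cprod_node {c f : α} (hfc : f ≠ c) {ch : Fin (ar f) → GTree α ar}
    {L : Set (GTree α ar)} {s : GTree α ar} :
    s ∈ cprod c (node f ch) L ↔
      ∃ ch', s = node f ch' ∧ ∀ i, ch' i ∈ cprod c (ch i) L := by
  simp [cprod, hfc]

lemma node_eq_of_arZero {f : α} (hf : ar f = 0) (ch ch' : Fin (ar f) → GTree α ar) :
    node f ch = node f ch' := by
  congr 1; funext i; exact (i.cast hf).elim0

lemma cprod_of_not_occurs {a : α} :
    ∀ {s : GTree α ar}, ¬ occurs a s → ∀ X, cprod a s X = {s}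
  | node f ch, h, X => by
    have h' : ¬ (f = a ∨ ∃ i, occurs a (ch i)) := h
    push_neg at h'
    obtain ⟨hf, hch⟩ := h'
    ext s
    rw [mem_cprod_node hf]
    constructor
    · rintro ⟨ch', rfl, hch'⟩
      have : ∀ i, ch' i = ch i := fun i => by
        have := hch' i; rw [cprod_of_not_occurs (hch i)] at this; exact this
      simp [funext this]
    · rintro rfl
      exact ⟨ch, rfl, fun i => by rw [cprod_of_not_occurs (hch i)]; rfl⟩


lemma cprod_node_arZero {c f : α} (hfc : f ≠ c) (hf : ar f = 0)
    (ch : Fin (ar f) → GTree α ar) (L : Set (GTree α ar)) :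
    cprod c (node f ch) L = {node f ch} := by
  ext s
  rw [mem_cprod_node hfc, Set.mem_singleton_iff]
  constructor
  · rintro ⟨ch', rfl, -⟩
    exact (node_eq_of_arZero hf ch ch').symm
  · rintro rfl
    exact ⟨ch, rfl, fun i => (i.cast hf).elim0⟩

lemma lprod_union {c : α} (S T L : Set (GTree α ar)) :
    lprod c (S ∪ T) L = lprod c S L ∪ lprod c T L := by
  simp only [lprod]; exact Set.biUnion_union S T _

lemma lprod_iUnion {c : α} {ι : Sort*} (S : ι → Set (GTree α ar)) (L : Set (GTree α ar)) :
    lprod c (⋃ i, S i) L = ⋃ i, lprod c (S i) L := by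
  simp only [lprod, Set.biUnion_iUnion]

lemma lprod_singleton {c : α} (t : GTree α ar) (L : Set (GTree α ar)) :
    lprod c {t} L = cprod c t L := by
  simp [lprod]

lemma interchange {a b : α} (ha : ar a = 0) (hb : ar b = 0) (hab : a ≠ b)
    {L2 : Set (GTree α ar)} (h2 : ∀ t ∈ L2, ¬ occurs a t) :
    ∀ (t : GTree α ar) (P : Set (GTree α ar)),
      lprod b (cprod a t P) L2 = lprod a (cprod b t L2) (lprod b P L2)
  | node f ch, P => by
    by_cases hfa : f = a
    · subst hfa
      rw [cprod_node_eq rfl, cprod_node_arZero hab ha, lprod_singleton,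
        cprod_node_eq rfl]
    · by_cases hfb : f = b
      · subst hfb
        rw [cprod_node_arZero hfa hb, lprod_singleton, cprod_node_eq rfl]
        ext s
        rw [mem_lprod]
        constructor
        · intro hs
          exact ⟨s, hs, by rw [cprod_of_not_occurs (h2 s hs)]; rfl⟩
        · rintro ⟨u, hu, hsu⟩
          rw [cprod_of_not_occurs (h2 u hu), Set.mem_singleton_iff] at hsu
          exact hsu ▸ hu
      · ext s
        rw [mem_lprod, mem_lprod]
        constructor
        · rintro ⟨u, hu, hsu⟩
          rw [mem_cprod_node hfa] at hu
          obtain ⟨ch', rfl, hch'⟩ := hu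
          rw [mem_cprod_node hfb] at hsu
          obtain ⟨ch'', rfl, hch''⟩ := hsu
          have hi : ∀ i, ch'' i ∈ lprod a (cprod b (ch i) L2) (lprod b P L2) := by
            intro i
            rw [← interchange ha hb hab h2 (ch i) P, mem_lprod]
            exact ⟨ch' i, hch' i, hch'' i⟩
          choose v hv1 hv2 using fun i => mem_lprod.mp (hi i)
          exact ⟨node f v, (mem_cprod_node hfb).mpr ⟨v, rfl, hv1⟩,
            (mem_cprod_node hfa).mpr ⟨ch'', rfl, hv2⟩⟩
        · rintro ⟨u, hu, hsu⟩
          rw [mem_cprod_node hfb] at hu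
          obtain ⟨v, rfl, hv⟩ := hu
          rw [mem_cprod_node hfa] at hsu
          obtain ⟨ch'', rfl, hch''⟩ := hsu
          have hi : ∀ i, ch'' i ∈ lprod b (cprod a (ch i) P) L2 := by
            intro i
            rw [interchange ha hb hab h2 (ch i) P, mem_lprod]
            exact ⟨v i, hv i, hch'' i⟩
          choose u hu1 hu2 using fun i => mem_lprod.mp (hi i)
          exact ⟨node f u, (mem_cprod_node hfa).mpr ⟨u, rfl, hu1⟩,
            (mem_cprod_node hfb).mpr ⟨ch'', rfl, hu2⟩⟩


lemma lprod_biUnion {c : α} (L : Set (GTree α ar)) (S : GTree α ar → Set (GTree α ar))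
    (L' : Set (GTree α ar)) :
    lprod c (⋃ t ∈ L, S t) L' = ⋃ t ∈ L, lprod c (S t) L' := by
  ext s; simp only [lprod, Set.mem_iUnion]; tauto

lemma lprod_lprod {a b : α} (ha : ar a = 0) (hb : ar b = 0) (hab : a ≠ b)
    {L2 : Set (GTree α ar)} (h2 : ∀ t ∈ L2, ¬ occurs a t)
    (L P : Set (GTree α ar)) :
    lprod b (lprod a L P) L2 = lprod a (lprod b L L2) (lprod b P L2) := by
  calc lprod b (lprod a L P) L2 = ⋃ t ∈ L, lprod b (cprod a t P) L2 :=
        lprod_biUnion L _ L2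
    _ = ⋃ t ∈ L, lprod a (cprod b t L2) (lprod b P L2) := by
        refine Set.iUnion₂_congr fun t _ => interchange ha hb hab h2 t P
    _ = lprod a (⋃ t ∈ L, cprod b t L2) (lprod b P L2) :=
        (lprod_biUnion L _ _).symm
    _ = lprod a (lprod b L L2) (lprod b P L2) := rfl

lemma lprod_iterProd {a b : α} (ha : ar a = 0) (hb : ar b = 0) (hab : a ≠ b)
    (L1 L2 : Set (GTree α ar)) (h2 : ∀ t ∈ L2, ¬ occurs a t) :
    ∀ n, lprod b (iterProd a ha L1 n) L2 = iterProd a ha (lprod b L1 L2) n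
  | 0 => by
    rw [iterProd, iterProd, lprod_singleton, leaf, cprod_node_arZero hab ha]
  | n + 1 => by
    rw [iterProd, iterProd, lprod_union,
      lprod_iterProd ha hb hab L1 L2 h2 n,
      lprod_lprod ha hb hab h2 L1 (iterProd a ha L1 n),
      lprod_iterProd ha hb hab L1 L2 h2 n]

end GTree

/-- if `a ≠ b` are rank-0 symbols and `a` appears in no tree of `L2`,
then `L1^{*_a} ·_b L2 = (L1 ·_b L2)^{*_a}`. -/
theorem closure_lprod {α : Type} {ar : α → ℕ} (a b : α)
    (ha : ar a = 0) (hb : ar b = 0) (hab : a ≠ b)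
    (L1 L2 : Set (GTree α ar)) (h2 : ∀ t ∈ L2, ¬ GTree.occurs a t) :
    GTree.lprod b (GTree.closure a ha L1) L2 =
      GTree.closure a ha (GTree.lprod b L1 L2) := by
  rw [GTree.closure, GTree.lprod_iUnion, GTree.closure]
  exact Set.iUnion_congr fun n =>
    GTree.lprod_iterProd ha hb hab L1 L2 h2 n
end

section
/- (Arden's lemma for trees, minimality part.) Let A and B be two tree languages over a graded alphabet Σ and let c be a symbol in Σ_0. Then for every tree language C over Σ satisfying C = A ·_c C ∪ B, one has A^{*_c} ·_c B ⊆ C; that is, A^{*_c} ·_c B is the smallest language L satisfying L = A ·_c L ∪ B. -/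
attribute [local instance] Classical.propDecidable

namespace GTree

lemma cprod_mono {α : Type} {ar : α → ℕ} (c : α) (t : GTree α ar)
    {L L' : Set (GTree α ar)} (h : L ⊆ L') : cprod c t L ⊆ cprod c t L' := by
  induction t with
  | node f ch ih =>
    intro s hs
    simp only [cprod] at hs ⊢
    split_ifs with hf
    · exact h (by simpa [cprod, hf] using hs)
    · simp only [cprod, hf, if_neg] at hs
      obtain ⟨ch', rfl, hch⟩ := hs
      exact ⟨ch', rfl, fun i => ih i (hch i)⟩

lemma cprod_assoc {α : Type} {ar : α → ℕ} (c : α) (a : GTree α ar)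
    {X B : Set (GTree α ar)} {t s : GTree α ar}
    (ht : t ∈ cprod c a X) (hs : s ∈ cprod c t B) :
    s ∈ cprod c a (lprod c X B) := by
  induction a generalizing t s with
  | node f ch ih =>
    by_cases hf : f = c
    · simp only [cprod, hf, if_pos rfl] at ht ⊢
      exact Set.mem_biUnion ht hs
    · simp only [cprod, hf, if_neg, ite_false] at ht ⊢
      obtain ⟨ch', rfl, hch⟩ := ht
      simp only [cprod, hf, if_neg, ite_false] at hs
      obtain ⟨ch'', rfl, hch'⟩ := hs
      exact ⟨ch'', rfl, fun i => ih i (hch i) (hch' i)⟩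

end GTree

/-- Arden's lemma for trees, minimality part: for every tree
language `C` with `C = A ·_c C ∪ B`, one has `A^{*_c} ·_c B ⊆ C`. -/
theorem arden_minimal {α : Type} {ar : α → ℕ} (c : α) (hc : ar c = 0)
    (A B : Set (GTree α ar)) :
    ∀ C : Set (GTree α ar), C = GTree.lprod c A C ∪ B →
      GTree.lprod c (GTree.closure c hc A) B ⊆ C := by
  intro C hC
  have key : ∀ n, GTree.lprod c (GTree.iterProd c hc A n) B ⊆ C := by
    intro n
    induction n with
    | zero =>
      intro s hs
      simp only [GTree.lprod, GTree.iterProd, Set.mem_iUnion, Set.mem_singleton_iff] at hs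
      obtain ⟨t, rfl, hs⟩ := hs
      have : s ∈ B := by simpa [GTree.cprod, GTree.leaf] using hs
      rw [hC]; exact Or.inr this
    | succ n ihn =>
      intro s hs
      simp only [GTree.lprod, GTree.iterProd, Set.mem_iUnion, Set.mem_union] at hs
      obtain ⟨t, ht, hs⟩ := hs
      rcases ht with ht | ht
      · exact ihn (Set.mem_biUnion ht hs)
      · obtain ⟨a, ha, hta⟩ := ht
        have : s ∈ GTree.cprod c a (GTree.lprod c (GTree.iterProd c hc A n) B) :=
          GTree.cprod_assoc c a hta hs
        have : s ∈ GTree.cprod c a C := GTree.cprod_mono c a ihn this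
        rw [hC]
        exact Or.inl (Set.mem_biUnion ha this)
  intro s hs
  simp only [GTree.lprod, GTree.closure, Set.mem_iUnion] at hs
  obtain ⟨t, ⟨n, ht⟩, hs⟩ := hs
  exact key n (Set.mem_biUnion ht hs)
end

section
/- Let 𝒳 = {𝔼_j = F_j | 1 ≤ j ≤ n} be an equation system over (Σ, {𝔼_1,…,𝔼_n}) and let 1 ≤ k ≤ n. Let 𝒳^k = {𝔼_k = F_k} ∪ {𝔼_j = (F_j)_{𝔼_k ← F_k} | j ≠ k, 1 ≤ j ≤ n} be the system obtained by substituting F_k for 𝔼_k in all other right-hand sides. Then 𝒳 and 𝒳^k are equivalent: an n-tuple 𝓛 of tree languages is a solution of 𝒳 if and only if it is a solution of 𝒳^k. -/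
attribute [local instance] Classical.propDecidable

/-- Rational tree expressions over alphabet `(α, ar)` and variables `V`.
In the products and closures, the subscript symbol is required to have rank 0. -/
inductive RExp (α : Type) (ar : α → ℕ) (V : Type) : Type
  | zero : RExp α ar V
  | var (v : V) : RExp α ar V
  | node (f : α) (es : Fin (ar f) → RExp α ar V) : RExp α ar V
  | plus (e₁ e₂ : RExp α ar V) : RExp α ar V
  | prod (c : α) (hc : ar c = 0) (e₁ e₂ : RExp α ar V) : RExp α ar V
  | star (c : α) (hc : ar c = 0) (e : RExp α ar V) : RExp α ar V

namespace RExp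

variable {α : Type} {ar : α → ℕ} {V : Type}

/-- The `𝓛`-language denoted by a rational expression, where `ρ` assigns a
tree language to each variable. -/
def lang (ρ : V → Set (GTree α ar)) : RExp α ar V → Set (GTree α ar)
  | zero => ∅
  | var v => ρ v
  | node f es => { t | ∃ ch : Fin (ar f) → GTree α ar,
      t = GTree.node f ch ∧ ∀ i, ch i ∈ lang ρ (es i) }
  | plus e₁ e₂ => lang ρ e₁ ∪ lang ρ e₂
  | prod c _ e₁ e₂ => GTree.lprod c (lang ρ e₁) (lang ρ e₂)
  | star c hc e => GTree.closure c hc (lang ρ e)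

/-- Substitution of the expression `F` for the variable `x`. -/
noncomputable def subst (x : V) (F : RExp α ar V) : RExp α ar V → RExp α ar V
  | zero => zero
  | var v => if v = x then F else var v
  | node f es => node f (fun i => subst x F (es i))
  | plus e₁ e₂ => plus (subst x F e₁) (subst x F e₂)
  | prod c hc e₁ e₂ => prod c hc (subst x F e₁) (subst x F e₂)
  | star c hc e => star c hc (subst x F e)

/-- The variable `v` occurs in the expression. -/
def varOcc (v : V) : RExp α ar V → Prop
  | zero => False
  | var w => w = v
  | node _ es => ∃ i, varOcc v (es i)
  | plus e₁ e₂ => varOcc v e₁ ∨ varOcc v e₂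
  | prod _ _ e₁ e₂ => varOcc v e₁ ∨ varOcc v e₂
  | star _ _ e => varOcc v e

/-- The symbol `b` is the subscript of a product `·_b` or a closure `^{*_b}`
occurring in the expression. -/
def opSym (b : α) : RExp α ar V → Prop
  | zero => False
  | var _ => False
  | node _ es => ∃ i, opSym b (es i)
  | plus e₁ e₂ => opSym b e₁ ∨ opSym b e₂
  | prod c _ e₁ e₂ => c = b ∨ opSym b e₁ ∨ opSym b e₂
  | star c _ e => c = b ∨ opSym b e

/-- The symbol `s` occurs somewhere in the expression (as a node symbol or as
the subscript of an operator). -/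
def symIn (s : α) : RExp α ar V → Prop
  | zero => False
  | var _ => False
  | node f es => f = s ∨ ∃ i, symIn s (es i)
  | plus e₁ e₂ => symIn s e₁ ∨ symIn s e₂
  | prod c _ e₁ e₂ => c = s ∨ symIn s e₁ ∨ symIn s e₂
  | star c _ e => c = s ∨ symIn s e

end RExp

/-- The output function of a tree automaton with transition set `Δ`:
`δ(f(t₁,…,tₙ)) = {q | ∃(f,q₁,…,qₙ,q) ∈ Δ, ∀ i, qᵢ ∈ δ(tᵢ)}`. -/
def GTree.out {α : Type} {ar : α → ℕ} {Q : Type}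
    (Δ : Set (Sigma fun f : α => (Fin (ar f) → Q) × Q)) : GTree α ar → Set Q
  | .node f ch => { q | ∃ qs : Fin (ar f) → Q,
      (⟨f, qs, q⟩ : Sigma fun f : α => (Fin (ar f) → Q) × Q) ∈ Δ ∧
      ∀ i, qs i ∈ GTree.out Δ (ch i) }

theorem lang_subst_of_fixed {α : Type} {ar : α → ℕ} {V : Type}
    (ρ : V → Set (GTree α ar)) (x : V) (F : RExp α ar V)
    (h : ρ x = RExp.lang ρ F) :
    ∀ e : RExp α ar V, RExp.lang ρ (RExp.subst x F e) = RExp.lang ρ e := by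
  intro e
  induction e with
  | zero => rfl
  | var v =>
    by_cases hv : v = x
    · simp [RExp.subst, RExp.lang, hv, h.symm]
    · simp [RExp.subst, RExp.lang, hv]
  | node f es ih =>
    simp only [RExp.subst, RExp.lang]
    ext t
    constructor <;> rintro ⟨ch, rfl, hch⟩ <;> exact ⟨ch, rfl, fun i => by
      have := hch i; simp only [ih i] at this ⊢; exact this⟩
  | plus e₁ e₂ ih₁ ih₂ => simp [RExp.subst, RExp.lang, ih₁, ih₂]
  | prod c hc e₁ e₂ ih₁ ih₂ => simp [RExp.subst, RExp.lang, ih₁, ih₂]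
  | star c hc e ih => simp [RExp.subst, RExp.lang, ih]

/-- the system `𝒳` and the substituted system `𝒳^k` (where `F_k`
is substituted for `𝔼_k` in every other right-hand side) have the same
solutions. -/
theorem system_subst_equiv {α : Type} {ar : α → ℕ} {n : ℕ}
    (F : Fin n → RExp α ar (Fin n)) (k : Fin n)
    (L : Fin n → Set (GTree α ar)) :
    (∀ j, L j = RExp.lang L (F j)) ↔
      ∀ j, L j = RExp.lang L (if j = k then F k else RExp.subst k (F k) (F j)) := by
  constructor
  · intro h j
    by_cases hj : j = k
    · simp [hj, ← h k]
    · simp only [hj, if_false]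
      rw [lang_subst_of_fixed L k (F k) (h k) (F j)]
      exact h j
  · intro h
    have hk : L k = RExp.lang L (F k) := by simpa using h k
    intro j
    by_cases hj : j = k
    · simpa [hj] using hk
    · have := h j
      rw [if_neg hj, lang_subst_of_fixed L k (F k) hk (F j)] at this
      exact this
end

section
/- Let 𝒳 = {𝔼_j = F_j | 1 ≤ j ≤ n} be an equation system over (Σ, {𝔼_1,…,𝔼_n}), and let 𝔼_k = F_k be an equation such that the variable 𝔼_k does not occur in F_k (the equation is not recursive). Then for every (n−1)-tuple Z = (L_1,…,L_{k−1},L_{k+1},…,L_n) of tree languages, the following are equivalent: (1) the n-tuple (L_1,…,L_{k−1}, L_Z(F_k), L_{k+1},…,L_n) is a solution of 𝒳; (2) Z is a solution of the system 𝒳^k ∖ {𝔼_k = F_k} over the remaining n−1 variables, where 𝒳^k is obtained from 𝒳 by substituting F_k for 𝔼_k in every other right-hand side. -/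
attribute [local instance] Classical.propDecidable

namespace RExp
variable {α : Type} {ar : α → ℕ} {V : Type}

theorem lang_congr {ρ ρ' : V → Set (GTree α ar)} (e : RExp α ar V)
    (h : ∀ v, varOcc v e → ρ v = ρ' v) : lang ρ e = lang ρ' e := by
  induction e with
  | zero => rfl
  | var v => exact h v rfl
  | node f es ih =>
      have h' : ∀ i, lang ρ (es i) = lang ρ' (es i) :=
        fun i => ih i (fun v hv => h v ⟨i, hv⟩)
      simp only [lang, h']
  | plus e₁ e₂ ih₁ ih₂ =>
      simp only [lang, ih₁ (fun v hv => h v (Or.inl hv)),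
        ih₂ (fun v hv => h v (Or.inr hv))]
  | prod c hc e₁ e₂ ih₁ ih₂ =>
      simp only [lang, ih₁ (fun v hv => h v (Or.inl hv)),
        ih₂ (fun v hv => h v (Or.inr hv))]
  | star c hc e ih => simp only [lang, ih h]

theorem lang_subst (ρ : V → Set (GTree α ar)) (x : V) (Fx : RExp α ar V)
    (e : RExp α ar V) :
    lang ρ (subst x Fx e) =
      lang (fun v => if v = x then lang ρ Fx else ρ v) e := by
  induction e with
  | zero => rfl
  | var v =>
      by_cases hv : v = x <;> simp [subst, lang, hv]
  | node f es ih => simp only [subst, lang, ih]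
  | plus e₁ e₂ ih₁ ih₂ => simp only [subst, lang, ih₁, ih₂]
  | prod c hc e₁ e₂ ih₁ ih₂ => simp only [subst, lang, ih₁, ih₂]
  | star c hc e ih => simp only [subst, lang, ih]

end RExp

/-- let `𝔼_k = F_k` be a non-recursive equation (`𝔼_k` does not
occur in `F_k`). For an `(n-1)`-tuple `Z` (indexed by the variables `≠ k`), let
`ext` be its extension to all variables (the value at `k` is irrelevant for the
expressions below, which do not contain `𝔼_k`); `L_Z(F_k)` is `lang ext (F k)`.
Then `(L_1,…,L_Z(F_k),…,L_n)` is a solution of `𝒳` iff `Z` is a solution of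
`𝒳^k ∖ {𝔼_k = F_k}`. -/
theorem solve_nonrecursive_equation {α : Type} {ar : α → ℕ} {n : ℕ}
    (F : Fin n → RExp α ar (Fin n)) (k : Fin n)
    (hk : ¬ RExp.varOcc k (F k))
    (Z : {j : Fin n // j ≠ k} → Set (GTree α ar)) :
    let ext : Fin n → Set (GTree α ar) := fun j => if h : j = k then ∅ else Z ⟨j, h⟩
    let Lfull : Fin n → Set (GTree α ar) :=
      fun j => if h : j = k then RExp.lang ext (F k) else Z ⟨j, h⟩
    ((∀ j, Lfull j = RExp.lang Lfull (F j)) ↔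
      ∀ (j : Fin n) (h : j ≠ k),
        Z ⟨j, h⟩ = RExp.lang ext (RExp.subst k (F k) (F j))) := by

  intro ext Lfull
  have hagree : ∀ v, v ≠ k → ext v = Lfull v := by
    intro v hv
    simp only [ext, Lfull, dif_neg hv]
  have hFk : RExp.lang ext (F k) = RExp.lang Lfull (F k) :=
    RExp.lang_congr (F k) (fun v hv => hagree v (fun h => hk (h ▸ hv)))
  have hsub : ∀ j, RExp.lang ext (RExp.subst k (F k) (F j)) = RExp.lang Lfull (F j) := by
    intro j
    rw [RExp.lang_subst]
    exact RExp.lang_congr (F j) (fun v _ => by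
      by_cases hv : v = k <;> simp [ext, Lfull, hv])
  constructor
  · intro hsol j hj
    have := hsol j
    simp only [Lfull, dif_neg hj] at this
    rw [hsub j, ← this]
  · intro hsol j
    by_cases hj : j = k
    · subst hj
      simp only [Lfull, dif_pos rfl]
      exact hFk
    · have := hsol j hj
      simp only [Lfull, dif_neg hj]
      rw [this, hsub j]
end

section
/- Let 𝒳 = {𝔼_j = F_j | 1 ≤ j ≤ n} be an equation system over (Σ, {𝔼_1,…,𝔼_n}). Define 𝔼_j <_𝒳 𝔼_k if and only if the variable 𝔼_j occurs in F_k, and let ⪯_𝒳 be the transitive closure of <_𝒳. Call 𝒳 recursive if there exist variables 𝔼_j and 𝔼_k with 𝔼_j ⪯_𝒳 𝔼_k and 𝔼_k ⪯_𝒳 𝔼_j. If 𝒳 is not recursive, then 𝒳 admits a unique solution. -/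
attribute [local instance] Classical.propDecidable

theorem RExp.lang_congr_s16 {α : Type} {ar : α → ℕ} {V : Type}
    (ρ ρ' : V → Set (GTree α ar)) (e : RExp α ar V)
    (h : ∀ v, RExp.varOcc v e → ρ v = ρ' v) :
    RExp.lang ρ e = RExp.lang ρ' e := by
  induction e with
  | zero => rfl
  | var v => exact h v rfl
  | node f es ih =>
    simp only [RExp.lang]
    have : ∀ i, RExp.lang ρ (es i) = RExp.lang ρ' (es i) := fun i =>
      ih i (fun v hv => h v ⟨i, hv⟩)
    ext t
    constructor <;> rintro ⟨ch, rfl, hch⟩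
    · exact ⟨ch, rfl, fun i => (this i) ▸ hch i⟩
    · exact ⟨ch, rfl, fun i => (this i).symm ▸ hch i⟩
  | plus e₁ e₂ ih₁ ih₂ =>
    simp only [RExp.lang]
    rw [ih₁ (fun v hv => h v (Or.inl hv)), ih₂ (fun v hv => h v (Or.inr hv))]
  | prod c hc e₁ e₂ ih₁ ih₂ =>
    simp only [RExp.lang]
    rw [ih₁ (fun v hv => h v (Or.inl hv)), ih₂ (fun v hv => h v (Or.inr hv))]
  | star c hc e ih =>
    simp only [RExp.lang]
    rw [ih h]

/-- a non-recursive equation system admits a unique solution.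
(`𝔼_j <_𝒳 𝔼_k` iff `𝔼_j` occurs in `F_k`; `⪯_𝒳` is the transitive closure;
`𝒳` is recursive if `𝔼_j ⪯_𝒳 𝔼_k` and `𝔼_k ⪯_𝒳 𝔼_j` for some `j`, `k`.) -/
theorem nonrecursive_unique_solution {α : Type} {ar : α → ℕ} {n : ℕ}
    (F : Fin n → RExp α ar (Fin n))
    (hnr : ¬ ∃ j k : Fin n,
      Relation.TransGen (fun p q : Fin n => RExp.varOcc p (F q)) j k ∧
      Relation.TransGen (fun p q : Fin n => RExp.varOcc p (F q)) k j) :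
    ∃! L : Fin n → Set (GTree α ar), ∀ j, L j = RExp.lang L (F j) := by
  set r : Fin n → Fin n → Prop := fun p q => RExp.varOcc p (F q) with hr
  have hirr : ∀ j : Fin n, ¬ Relation.TransGen r j j := by
    intro j hj
    exact hnr ⟨j, j, hj, hj⟩
  have hwfT : WellFounded (Relation.TransGen r) := by
    have : IsIrrefl (Fin n) (Relation.TransGen r) := ⟨hirr⟩
    exact Finite.wellFounded_of_trans_of_irrefl _
  have hwf : WellFounded r := Subrelation.wf (fun h => Relation.TransGen.single h) hwfT
  set L : Fin n → Set (GTree α ar) :=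
    hwf.fix (fun j rec => RExp.lang (fun v => if h : r v j then rec v h else ∅) (F j))
    with hL
  have hfix : ∀ j, L j =
      RExp.lang (fun v => if h : r v j then L v else ∅) (F j) := by
    intro j
    rw [hL]
    exact hwf.fix_eq _ j
  have hsol : ∀ j, L j = RExp.lang L (F j) := by
    intro j
    rw [hfix j]
    exact RExp.lang_congr_s16 _ _ _ (fun v hv => dif_pos hv)
  refine ⟨L, hsol, ?_⟩
  intro L' hL'
  funext j
  induction j using hwf.induction with
  | _ j ih =>
    rw [hL' j, hsol j]
    exact (RExp.lang_congr_s16 _ _ _ (fun v hv => (ih v hv).symm)).symm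
end

section
/- Let 𝒜 = (Σ, Q, Q_f, Δ) be a finite tree automaton over a graded alphabet Σ with Q = {1,…,n}, and let 𝒳_𝒜 be its associated equation system, consisting for each state q of the equation 𝔼_q = Σ_{(f,q_1,…,q_m,q) ∈ Δ} f(𝔼_{q_1},…,𝔼_{q_m}). If the n-tuple of tree languages (M_1,…,M_n) is a solution of 𝒳_𝒜, then M_j = L(j) for every state 1 ≤ j ≤ n, where L(j) is the down language of state j. Consequently, if (E_1,…,E_n) is a tuple of variable-free rational expressions whose languages form a solution of 𝒳_𝒜, then the accepted language satisfies L(𝒜) = ⋃_{j ∈ Q_f} L(E_j), i.e. L(𝒜) is denoted by the rational expression Σ_{j ∈ Q_f} E_j. -/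
attribute [local instance] Classical.propDecidable

theorem solution_is_down {α : Type} {ar : α → ℕ} {n : ℕ}
    (Δ : Set (Sigma fun f : α => (Fin (ar f) → Fin n) × Fin n))
    (M : Fin n → Set (GTree α ar))
    (hM : ∀ q : Fin n, M q =
      { t : GTree α ar | ∃ (f : α) (qs : Fin (ar f) → Fin n) (ch : Fin (ar f) → GTree α ar),
          (⟨f, qs, q⟩ : Sigma fun f : α => (Fin (ar f) → Fin n) × Fin n) ∈ Δ ∧
          t = GTree.node f ch ∧ ∀ i, ch i ∈ M (qs i) }) :
    ∀ (t : GTree α ar) (q : Fin n), t ∈ M q ↔ q ∈ GTree.out Δ t := by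
  intro t
  induction t with
  | node f ch ih =>
    intro q
    rw [hM q]
    constructor
    · rintro ⟨f', qs, ch', hd, heq, hmem⟩
      obtain ⟨rfl, hch⟩ : f = f' ∧ HEq ch ch' := by
        injection heq with h1 h2; exact ⟨h1, h2⟩
      obtain rfl := eq_of_heq hch
      exact ⟨qs, hd, fun i => (ih i (qs i)).mp (hmem i)⟩
    · rintro ⟨qs, hd, hmem⟩
      exact ⟨f, qs, ch, hd, rfl, fun i => (ih i (qs i)).mpr (hmem i)⟩

/-- let `𝒜` be a finite tree automaton with states `Fin n`. If the
tuple `M` is a solution of the associated system `𝒳_𝒜` (whose equation for `q`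
says that `M q` is the union, over the transitions `(f,q_1,…,q_m,q) ∈ Δ`, of
`f(M q_1,…,M q_m)`), then `M q` is the down language of `q` for every state `q`.
Consequently, if `(E_1,…,E_n)` are variable-free rational expressions whose
languages form a solution of `𝒳_𝒜`, then `L(𝒜) = ⋃_{q ∈ Q_f} L(E_q)`. -/
theorem automaton_system_solution {α : Type} {ar : α → ℕ} {n : ℕ}
    (Δ : Set (Sigma fun f : α => (Fin (ar f) → Fin n) × Fin n)) (hΔ : Δ.Finite)
    (Qf : Set (Fin n))
    (M : Fin n → Set (GTree α ar))
    (hM : ∀ q : Fin n, M q =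
      { t : GTree α ar | ∃ (f : α) (qs : Fin (ar f) → Fin n) (ch : Fin (ar f) → GTree α ar),
          (⟨f, qs, q⟩ : Sigma fun f : α => (Fin (ar f) → Fin n) × Fin n) ∈ Δ ∧
          t = GTree.node f ch ∧ ∀ i, ch i ∈ M (qs i) })
    (E : Fin n → RExp α ar (Fin n))
    (hEvf : ∀ j, ∀ v : Fin n, ¬ RExp.varOcc v (E j))
    (hE : ∀ q : Fin n, RExp.lang (fun _ => (∅ : Set (GTree α ar))) (E q) =
      { t : GTree α ar | ∃ (f : α) (qs : Fin (ar f) → Fin n) (ch : Fin (ar f) → GTree α ar),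
          (⟨f, qs, q⟩ : Sigma fun f : α => (Fin (ar f) → Fin n) × Fin n) ∈ Δ ∧
          t = GTree.node f ch ∧
          ∀ i, ch i ∈ RExp.lang (fun _ => (∅ : Set (GTree α ar))) (E (qs i)) }) :
    (∀ q : Fin n, M q = { t : GTree α ar | q ∈ GTree.out Δ t }) ∧
      { t : GTree α ar | ∃ q ∈ Qf, q ∈ GTree.out Δ t } =
        ⋃ q ∈ Qf, RExp.lang (fun _ => (∅ : Set (GTree α ar))) (E q) := by
  have hMd := solution_is_down Δ M hM
  have hEd := solution_is_down Δ (fun q => RExp.lang (fun _ => (∅ : Set (GTree α ar))) (E q)) hE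
  constructor
  · intro q
    ext t
    exact hMd t q
  · ext t
    simp only [Set.mem_iUnion, Set.mem_setOf_eq]
    constructor
    · rintro ⟨q, hq, ho⟩
      exact ⟨q, hq, (hEd t q).mpr ho⟩
    · rintro ⟨q, hq, ho⟩
      exact ⟨q, hq, (hEd t q).mp ho⟩
end
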